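/- Let G = (V, E) be a finite bipartite multigraph. Then the number of subsets A ⊆ E such that the spanning subgraph (V, A) is a forest equals the number of distinct degree sequences deg_H = (deg_H(v_1),…,deg_H(v_n)) arising from spanning subgraphs H = (V, F) of G with F ⊆ E. -/

import Mathlib

open Finset

variable {V E : Type*}

/-- Number of connected components of the multigraph on vertex set `V`
with edges `A ⊆ E`, where `ends e` gives the (unordered) endpoints of `e`. -/
noncomputable def numComponents (ends : E → Sym2 V) (A : Finset E) : ℕ :=
  Nat.card (SimpleGraph.fromRel fun x y => ∃ e ∈ A, ends e = s(x, y)).ConnectedComponent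

/-- The spanning subgraph `(V, A)` of the multigraph is a forest:
no loops, no parallel edges, and the underlying simple graph is acyclic. -/
def IsForestEdges (ends : E → Sym2 V) (A : Finset E) : Prop :=
  (∀ e ∈ A, ¬ (ends e).IsDiag) ∧ Set.InjOn ends ↑A ∧
    (SimpleGraph.fromRel fun x y => ∃ e ∈ A, ends e = s(x, y)).IsAcyclic

/-- Subset-expansion evaluation of the Tutte polynomial of the multigraph. -/
noncomputable def tutteEval [Fintype V] [Fintype E] [DecidableEq E]
    (ends : E → Sym2 V) (x y : ℤ) : ℤ :=
  ∑ A : Finset E,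
    (x - 1) ^ (numComponents ends A - numComponents ends Finset.univ) *
      (y - 1) ^ (numComponents ends A + A.card - Fintype.card V)

/-- Tail of edge `e` under the orientation `σ` (edges carry a reference
direction `src e → tgt e`; `σ e = true` means the edge is flipped). -/
def otail (src tgt : E → V) (σ : E → Bool) (e : E) : V :=
  if σ e then tgt e else src e

/-- Head of edge `e` under the orientation `σ`. -/
def ohead (src tgt : E → V) (σ : E → Bool) (e : E) : V :=
  if σ e then src e else tgt e

/-- Outdegree of `v` under the orientation `σ`. -/
def outdeg [Fintype E] [DecidableEq V] (src tgt : E → V) (σ : E → Bool) (v : V) : ℕ :=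
  (Finset.univ.filter fun e => otail src tgt σ e = v).card

/-- Indegree of `v` under the orientation `σ`. -/
def indeg [Fintype E] [DecidableEq V] (src tgt : E → V) (σ : E → Bool) (v : V) : ℕ :=
  (Finset.univ.filter fun e => ohead src tgt σ e = v).card

/-- Score of `v` under the orientation `σ`: outdegree minus indegree. -/
def score [Fintype E] [DecidableEq V] (src tgt : E → V) (σ : E → Bool) (v : V) : ℤ :=
  (outdeg src tgt σ v : ℤ) - (indeg src tgt σ v : ℤ)

/-- Score of `v` in the spanning subdigraph of `G_σ` with arc set `F`. -/
def scoreSub [DecidableEq V] (src tgt : E → V) (σ : E → Bool) (F : Finset E) (v : V) : ℤ :=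
  ((F.filter fun e => otail src tgt σ e = v).card : ℤ) -
    ((F.filter fun e => ohead src tgt σ e = v).card : ℤ)

/-- Degree of `v` in the spanning subgraph with edge set `F` (loops count twice). -/
def degIn [DecidableEq V] (src tgt : E → V) (F : Finset E) (v : V) : ℕ :=
  (F.filter fun e => src e = v).card + (F.filter fun e => tgt e = v).card

/-- Directed reachability in the digraph `G_σ`. -/
def dirReach (src tgt : E → V) (σ : E → Bool) : V → V → Prop :=
  Relation.ReflTransGen fun x y => ∃ e, otail src tgt σ e = x ∧ ohead src tgt σ e = y

/-- incidence vector of an arc -/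
def wv [DecidableEq V] {E : Type*} (src tgt : E → V) (e : E) : V → ℤ :=
  Pi.single (tgt e) 1 - Pi.single (src e) 1

lemma extraction [DecidableEq V] {E : Type*} [DecidableEq E] (hd tl : E → V)
    (A : Finset E) : ∀ (t : V),
      0 < (∑ e ∈ A, wv tl hd e) t →
      ∃ s : V, (∑ e ∈ A, wv tl hd e) s < 0 ∧
        ∃ B ⊆ A, ∑ e ∈ B, wv tl hd e = Pi.single t 1 - Pi.single s 1 := by
  induction A using Finset.strongInduction with
  | H A ih =>
  intro t ht
  have hexa : ∃ a ∈ A, hd a = t := by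
    by_contra hno
    push_neg at hno
    have : (∑ e ∈ A, wv tl hd e) t ≤ 0 := by
      rw [Finset.sum_apply]
      apply Finset.sum_nonpos
      intro e he
      simp only [wv, Pi.sub_apply, Pi.single_apply]
      have : ¬ t = hd e := fun h => hno e he h.symm
      simp [this]
      positivity
    omega
  obtain ⟨a, haA, hat⟩ := hexa
  by_cases hloop : hd a = tl a
  · -- degenerate arc: discard it
    have hz : wv tl hd a = 0 := by
      simp [wv, hloop]
    have hsum : ∑ e ∈ A, wv tl hd e = ∑ e ∈ A.erase a, wv tl hd e := by
      rw [← Finset.sum_erase_add A _ haA, hz, add_zero]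
    obtain ⟨s, hs, B, hB, hBsum⟩ := ih (A.erase a) (Finset.erase_ssubset haA) t
      (by rw [← hsum]; exact ht)
    exact ⟨s, by rw [hsum]; exact hs, B, hB.trans (Finset.erase_subset _ _), hBsum⟩
  · set v := tl a with hv
    by_cases hxv : (∑ e ∈ A, wv tl hd e) v < 0
    · refine ⟨v, hxv, {a}, Finset.singleton_subset_iff.mpr haA, ?_⟩
      simp [wv, hat, hv]
    · push_neg at hxv
      have hvt : v ≠ t := fun h => hloop (by rw [hat, ← h])
      have hsum : ∀ z, (∑ e ∈ A.erase a, wv tl hd e) z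
          = (∑ e ∈ A, wv tl hd e) z - wv tl hd a z := by
        intro z
        rw [← Finset.sum_erase_add A _ haA]
        simp
      have hv' : 0 < (∑ e ∈ A.erase a, wv tl hd e) v := by
        have : wv tl hd a v = -1 := by
          simp [wv, Pi.single_apply, hat, ← hv, hvt]
        rw [hsum, this]; omega
      obtain ⟨s, hs, B', hB', hBsum⟩ := ih (A.erase a) (Finset.erase_ssubset haA) v hv'
      have hst : s ≠ t := by
        intro h
        rw [h] at hs
        have : wv tl hd a t = 1 := by
          have h1 : t ≠ tl a := fun hh => hvt hh.symm
          simp [wv, Pi.single_apply, hat, h1]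
        rw [hsum, this] at hs
        omega
      have hsv : s ≠ v := by
        intro h; rw [h] at hs; omega
      have hxs : (∑ e ∈ A, wv tl hd e) s < 0 := by
        have : wv tl hd a s = 0 := by
          have h1 : s ≠ tl a := hsv
          simp [wv, Pi.single_apply, hat, h1, hst]
        have := hsum s
        omega
      have haB' : a ∉ B' := fun h => (Finset.mem_erase.mp (hB' h)).1 rfl
      refine ⟨s, hxs, insert a B',
        Finset.insert_subset haA (hB'.trans (Finset.erase_subset _ _)), ?_⟩
      rw [Finset.sum_insert haB', hBsum]
      have : wv tl hd a = Pi.single t 1 - Pi.single v 1 := by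
        simp [wv, hat, hv]
      rw [this]
      abel

lemma sum_split [DecidableEq V] {E : Type*} [DecidableEq E] (f : E → V → ℤ)
    (F B : Finset E) : ∑ e ∈ F, f e = (∑ e ∈ F \ B, f e) + ∑ e ∈ F ∩ B, f e := by
  rw [← Finset.sum_union (Finset.disjoint_sdiff_inter F B), Finset.sdiff_union_inter]

lemma chain_lemma [DecidableEq V] {E : Type*} [DecidableEq E] (src tgt : E → V)
    {s t : V} (hst : s ≠ t) (F F' : Finset E) {k : ℤ} (hk : 1 ≤ k)
    (h : ∑ e ∈ F', wv src tgt e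
        = (∑ e ∈ F, wv src tgt e) + k • (Pi.single t 1 - Pi.single s 1)) :
    ∃ F'' : Finset E, ∑ e ∈ F'', wv src tgt e
      = (∑ e ∈ F, wv src tgt e) + (Pi.single t 1 - Pi.single s 1) := by
  set u : V → ℤ := Pi.single t 1 - Pi.single s 1 with hu
  set tl' : E → V := fun e => if e ∈ F' then src e else tgt e with htl
  set hd' : E → V := fun e => if e ∈ F' then tgt e else src e with hhd
  have hdF' : ∀ e ∈ F', wv tl' hd' e = wv src tgt e := by
    intro e he; simp [wv, htl, hhd, he]
  have hdF : ∀ e, e ∉ F' → wv tl' hd' e = -wv src tgt e := by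
    intro e he; simp [wv, htl, hhd, he]
  set A : Finset E := (F' \ F) ∪ (F \ F') with hA
  have hdisj : Disjoint (F' \ F) (F \ F') := disjoint_sdiff_sdiff
  have hAsum : ∑ e ∈ A, wv tl' hd' e = k • u := by
    rw [hA, Finset.sum_union hdisj]
    have h1 : ∑ e ∈ F' \ F, wv tl' hd' e = ∑ e ∈ F' \ F, wv src tgt e :=
      Finset.sum_congr rfl fun e he => hdF' e (Finset.mem_sdiff.mp he).1
    have h2 : ∑ e ∈ F \ F', wv tl' hd' e = -∑ e ∈ F \ F', wv src tgt e := by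
      rw [← Finset.sum_neg_distrib]
      exact Finset.sum_congr rfl fun e he => hdF e (Finset.mem_sdiff.mp he).2
    rw [h1, h2]
    have e1 := sum_split (wv src tgt) F' F
    have e2 := sum_split (wv src tgt) F F'
    rw [Finset.inter_comm F F'] at e2
    have : ∑ e ∈ F', wv src tgt e - ∑ e ∈ F, wv src tgt e = k • u := by
      rw [h]; abel
    rw [e1, e2] at this
    rw [← this]; abel
  have hxt : 0 < (∑ e ∈ A, wv tl' hd' e) t := by
    rw [hAsum]
    simp [u, Pi.single_apply, Ne.symm hst]
    omega
  obtain ⟨s₀, hs₀, B, hBA, hBsum⟩ := extraction hd' tl' A t hxt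
  have hs₀s : s₀ = s := by
    rw [hAsum] at hs₀
    by_contra hne
    have : (0:ℤ) ≤ u s₀ := by
      simp [u, Pi.single_apply, hne]
      positivity
    have : (0:ℤ) ≤ (k • u) s₀ := by
      simp only [Pi.smul_apply, smul_eq_mul]
      exact mul_nonneg (by omega) this
    omega
  rw [hs₀s] at hBsum
  refine ⟨(F \ B) ∪ (B \ F), ?_⟩
  rw [Finset.sum_union disjoint_sdiff_sdiff]
  have hBsplit : ∑ e ∈ B, wv tl' hd' e
      = (∑ e ∈ B \ F, wv src tgt e) - ∑ e ∈ B ∩ F, wv src tgt e := by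
    rw [sum_split (wv tl' hd') B F]
    have h1 : ∑ e ∈ B \ F, wv tl' hd' e = ∑ e ∈ B \ F, wv src tgt e := by
      refine Finset.sum_congr rfl fun e he => hdF' e ?_
      have heA := hBA (Finset.mem_sdiff.mp he).1
      rw [hA] at heA
      rcases Finset.mem_union.mp heA with h' | h'
      · exact (Finset.mem_sdiff.mp h').1
      · exact absurd (Finset.mem_sdiff.mp h').1 (Finset.mem_sdiff.mp he).2
    have h2 : ∑ e ∈ B ∩ F, wv tl' hd' e = -∑ e ∈ B ∩ F, wv src tgt e := by
      rw [← Finset.sum_neg_distrib]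
      refine Finset.sum_congr rfl fun e he => hdF e ?_
      have heA := hBA (Finset.mem_inter.mp he).1
      rw [hA] at heA
      rcases Finset.mem_union.mp heA with h' | h'
      · exact absurd (Finset.mem_inter.mp he).2 (Finset.mem_sdiff.mp h').2
      · exact (Finset.mem_sdiff.mp h').2
    rw [h1, h2]; abel
  rw [hBsum] at hBsplit
  have e2 := sum_split (wv src tgt) F B
  rw [e2]
  rw [Finset.inter_comm B F] at hBsplit
  have : ∑ e ∈ B \ F, wv src tgt e = u + ∑ e ∈ F ∩ B, wv src tgt e := by
    rw [hu, hBsplit]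
    abel
  rw [this, hu]
  abel

lemma count_step {M N : Type*} [AddCommGroup M] [AddCommGroup N]
    {T : Set M} (hT : T.Finite) {u : M}
    (hfree : ∀ n : ℤ, n • u = 0 → n = 0)
    (chain : ∀ x ∈ T, ∀ k : ℤ, 1 ≤ k → x + k • u ∈ T → x + u ∈ T)
    (φ : M →+ N) (hker : ∀ m, φ m = 0 ↔ ∃ n : ℤ, m = n • u) :
    (T ∪ (fun x => u + x) '' T).ncard = T.ncard + (φ '' T).ncard := by
  have hφu : φ u = 0 := (hker u).mpr ⟨1, (one_smul ℤ u).symm⟩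
  have hdiff : ∀ x y : M, φ x = φ y ↔ ∃ n : ℤ, y = x + n • u := by
    intro x y
    constructor
    · intro hxy
      have : φ (y - x) = 0 := by rw [map_sub, hxy, sub_self]
      obtain ⟨n, hn⟩ := (hker _).mp this
      exact ⟨n, by rw [← hn]; abel⟩
    · rintro ⟨n, rfl⟩
      rw [map_add, map_zsmul, hφu, smul_zero, add_zero]
  have hImg : ((fun x => u + x) '' T).Finite := hT.image _
  set D : Set M := ((fun x => u + x) '' T) \ T with hD
  have hDfin : D.Finite := hImg.diff
  have hunion : T ∪ (fun x => u + x) '' T = T ∪ D := (Set.union_diff_self).symm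
  have hdisj : Disjoint T D := Set.disjoint_left.mpr fun a ha hd => hd.2 ha
  rw [hunion, Set.ncard_union_eq hdisj hT hDfin]
  congr 1
  -- D maps bijectively onto φ '' T via φ
  have hmemD : ∀ y ∈ D, ∃ x ∈ T, y = u + x := by
    rintro y ⟨⟨x, hx, rfl⟩, -⟩; exact ⟨x, hx, rfl⟩
  have hinj : Set.InjOn φ D := by
    intro y₁ h₁ y₂ h₂ hφeq
    obtain ⟨x₁, hx₁, rfl⟩ := hmemD _ h₁
    obtain ⟨x₂, hx₂, rfl⟩ := hmemD _ h₂
    obtain ⟨n, hn⟩ := (hdiff _ _).mp hφeq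
    have hx21 : x₂ = x₁ + n • u := by
      apply add_left_cancel (a := u)
      rw [hn]; abel
    rcases lt_trichotomy n 0 with hneg | rfl | hpos
    · exfalso
      have hx12 : x₂ + (-n) • u = x₁ := by rw [hx21, neg_smul]; abel
      have h' := chain x₂ hx₂ (-n) (by omega) (by rw [hx12]; exact hx₁)
      exact h₂.2 (by rwa [add_comm] at h')
    · rw [hx21]; simp
    · exfalso
      have h' := chain x₁ hx₁ n (by omega) (by rw [← hx21]; exact hx₂)
      exact h₁.2 (by rwa [add_comm] at h')
  have himg : φ '' D = φ '' T := by
    apply Set.Subset.antisymm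
    · rintro _ ⟨y, hy, rfl⟩
      obtain ⟨x, hx, rfl⟩ := hmemD _ hy
      refine ⟨x, hx, ?_⟩
      rw [map_add, hφu, zero_add]
    · rintro _ ⟨x₀, hx₀, rfl⟩
      set S : Set ℤ := {n : ℤ | x₀ + n • u ∈ T} with hS
      have hSfin : S.Finite := by
        have : S = (fun n : ℤ => x₀ + n • u) ⁻¹' T := rfl
        rw [this]
        apply Set.Finite.preimage _ hT
        intro a _ b _ hab
        have h1 : a • u = b • u := add_left_cancel hab
        have : (a - b) • u = 0 := by rw [sub_smul, h1, sub_self]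
        have := hfree _ this
        omega
      have h0S : (0:ℤ) ∈ S := by simp [hS, hx₀]
      obtain ⟨m, hmS, hmax⟩ := Set.Finite.exists_maximalFor id S hSfin ⟨0, h0S⟩
      refine ⟨u + (x₀ + m • u), ⟨⟨x₀ + m • u, hmS, rfl⟩, ?_⟩, ?_⟩
      · intro hyT
        have : u + (x₀ + m • u) = x₀ + (m + 1) • u := by
          rw [add_smul, one_smul]; abel
        rw [this] at hyT
        have := hmax (j := m + 1) hyT (by simp only [id_eq]; omega)
        simp only [id_eq] at this
        omega
      · rw [map_add, hφu, zero_add, map_add, map_zsmul, hφu, smul_zero, add_zero]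
  rw [← himg, Set.ncard_image_of_injOn hinj]

/-- Integer linear independence, as a predicate on finsets. -/
def Indep {E M : Type*} [AddCommGroup M] (w : E → M) (F : Finset E) : Prop :=
  ∀ g : E → ℤ, ∑ e ∈ F, g e • w e = 0 → ∀ e ∈ F, g e = 0

lemma sum_subtype_val {E M : Type*} [AddCommMonoid M] (p : E → Prop) [DecidablePred p]
    (F : Finset E) (hF : ∀ e ∈ F, p e) (f : E → M) :
    ∑ e' ∈ F.subtype p, f e'.val = ∑ e ∈ F, f e := by
  have h := Finset.sum_map (F.subtype p) (Function.Embedding.subtype p) f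
  rw [Finset.subtype_map, Finset.filter_true_of_mem hF] at h
  simp only [Function.Embedding.coe_subtype] at h
  exact h.symm

lemma indep_subtype {E M : Type*} [AddCommGroup M] (w : E → M) (p : E → Prop)
    [DecidablePred p] (F : Finset E) (hF : ∀ e ∈ F, p e) :
    Indep w F ↔ Indep (fun e' : Subtype p => w e'.val) (F.subtype p) := by
  constructor
  · intro h g' hg' e' he'
    classical
    set g : E → ℤ := fun e => if hp : p e then g' ⟨e, hp⟩ else 0 with hg
    have hsum : ∑ e ∈ F, g e • w e = ∑ x ∈ F.subtype p, g' x • w x.val := by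
      rw [← sum_subtype_val p F hF (fun e => g e • w e)]
      refine Finset.sum_congr rfl fun x _ => ?_
      simp [hg, x.2]
    have := h g (by rw [hsum, hg']) e'.val (Finset.mem_subtype.mp he')
    simpa [hg, e'.2] using this
  · intro h g hg e he
    have hsum : ∑ x ∈ F.subtype p, g x.val • w x.val = 0 := by
      rw [sum_subtype_val p F hF (fun e => g e • w e), hg]
    exact h (fun x => g x.val) hsum ⟨e, hF e he⟩ (Finset.mem_subtype.mpr he)

lemma indep_insert_contract {E M N : Type*} [AddCommGroup M] [AddCommGroup N]
    [DecidableEq E] (w : E → M) (φ : M →+ N) (e₀ : E)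
    (hfree : ∀ n : ℤ, n • w e₀ = 0 → n = 0)
    (hker : ∀ m, φ m = 0 ↔ ∃ n : ℤ, m = n • w e₀)
    (S : Finset E) (hS : e₀ ∉ S) :
    Indep w (insert e₀ S) ↔ Indep (fun e => φ (w e)) S := by
  have hφu : φ (w e₀) = 0 := (hker _).mpr ⟨1, (one_smul ℤ _).symm⟩
  constructor
  · intro h g hg e he
    have h0 : φ (∑ e ∈ S, g e • w e) = 0 := by
      rw [map_sum]
      simpa only [map_zsmul] using hg
    obtain ⟨n, hn⟩ := (hker _).mp h0
    set g' : E → ℤ := fun e => if e = e₀ then -n else g e with hg'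
    have hsum : ∑ e ∈ insert e₀ S, g' e • w e = 0 := by
      rw [Finset.sum_insert hS]
      have : ∑ e ∈ S, g' e • w e = ∑ e ∈ S, g e • w e :=
        Finset.sum_congr rfl fun e he => by
          have : e ≠ e₀ := fun hh => hS (hh ▸ he)
          simp [hg', this]
      rw [this, hn]
      simp [hg', neg_smul]
    have := h g' hsum e (Finset.mem_insert_of_mem he)
    have hne : e ≠ e₀ := fun hh => hS (hh ▸ he)
    simpa [hg', hne] using this
  · intro h g hg
    have hins : g e₀ • w e₀ + ∑ e ∈ S, g e • w e = 0 := by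
      rw [Finset.sum_insert hS] at hg; exact hg
    have hφ0 : ∑ e ∈ S, g e • φ (w e) = 0 := by
      have := congrArg φ hins
      rw [map_zero, map_add, map_zsmul, hφu, smul_zero, zero_add, map_sum] at this
      simpa only [map_zsmul] using this
    have hzero : ∀ e ∈ S, g e = 0 := h g hφ0
    have hsumS : ∑ e ∈ S, g e • w e = 0 :=
      Finset.sum_eq_zero fun e he => by rw [hzero e he, zero_smul]
    have he₀ : g e₀ = 0 := by
      apply hfree
      rw [hsumS, add_zero] at hins
      exact hins
    intro e he
    rcases Finset.mem_insert.mp he with rfl | heS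
    · exact he₀
    · exact hzero e heS

lemma card_partition {α : Type*} [Finite α] (p q : α → Prop) :
    Nat.card {x // p x}
      = Nat.card {x // p x ∧ q x} + Nat.card {x // p x ∧ ¬ q x} := by
  classical
  rw [Nat.card_congr (Equiv.sumCompl (fun y : {x // p x} => q y.val)).symm, Nat.card_sum]
  congr 1
  · exact Nat.card_congr (Equiv.subtypeSubtypeEquivSubtypeInter p q)
  · exact Nat.card_congr (Equiv.subtypeSubtypeEquivSubtypeInter p (fun x => ¬ q x))

lemma map_subtype_subtype {E : Type*} (p : E → Prop) [DecidablePred p]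
    (F' : Finset (Subtype p)) :
    (F'.map (Function.Embedding.subtype p)).subtype p = F' := by
  ext a
  simp only [Finset.mem_subtype, Finset.mem_map, Function.Embedding.coe_subtype]
  constructor
  · rintro ⟨b, hb, hba⟩
    rwa [Subtype.ext hba] at hb
  · intro ha
    exact ⟨a, ha, rfl⟩

lemma mem_map_ne {E : Type*} (p : E → Prop) (F' : Finset (Subtype p))
    {e : E} (he : e ∈ F'.map (Function.Embedding.subtype p)) : p e := by
  obtain ⟨b, _, rfl⟩ := Finset.mem_map.mp he
  exact b.2

/-- deletion equivalence -/
noncomputable def eqDel {E M : Type*} [AddCommGroup M] (w : E → M) (e₀ : E) :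
    {F : Finset E // Indep w F ∧ e₀ ∉ F}
      ≃ {F' : Finset {e : E // e ≠ e₀} // Indep (fun e' => w e'.val) F'} := by
  classical
  refine
  { toFun := fun F => ⟨(F : Finset E).subtype (fun e => e ≠ e₀),
      (indep_subtype w (fun e => e ≠ e₀) F (fun e he hh => F.2.2 (hh ▸ he))).mp F.2.1⟩
    invFun := fun F' => ⟨(F' : Finset _).map (Function.Embedding.subtype (fun e => e ≠ e₀)), ?_, ?_⟩
    left_inv := ?_
    right_inv := ?_ }
  · refine (indep_subtype w (fun e => e ≠ e₀) _ (fun e he => mem_map_ne (fun e => e ≠ e₀) F'.1 he)).mpr ?_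
    rw [map_subtype_subtype]
    exact F'.2
  · intro hmem
    exact (mem_map_ne (fun e => e ≠ e₀) F'.1 hmem) rfl
  · rintro ⟨F, hF⟩
    apply Subtype.ext
    simp only [Finset.subtype_map]
    exact Finset.filter_true_of_mem (fun e he hh => hF.2 (hh ▸ he))
  · rintro ⟨F', hF'⟩
    exact Subtype.ext (map_subtype_subtype _ _)

/-- contraction equivalence -/
noncomputable def eqCon {E M N : Type*} [AddCommGroup M] [AddCommGroup N]
    (w : E → M) (φ : M →+ N) (e₀ : E)
    (hfree : ∀ n : ℤ, n • w e₀ = 0 → n = 0)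
    (hker : ∀ m, φ m = 0 ↔ ∃ n : ℤ, m = n • w e₀) :
    {F : Finset E // Indep w F ∧ e₀ ∈ F}
      ≃ {F' : Finset {e : E // e ≠ e₀} // Indep (fun e' => φ (w e'.val)) F'} := by
  classical
  refine
  { toFun := fun F => ⟨((F : Finset E).erase e₀).subtype (fun e => e ≠ e₀), ?_⟩
    invFun := fun F' => ⟨insert e₀ ((F' : Finset _).map (Function.Embedding.subtype (fun e => e ≠ e₀))),
      ?_, Finset.mem_insert_self _ _⟩
    left_inv := ?_
    right_inv := ?_ }
  · have h1 : Indep w (insert e₀ ((F : Finset E).erase e₀)) := by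
      rw [Finset.insert_erase F.2.2]
      exact F.2.1
    have h2 := (indep_insert_contract w φ e₀ hfree hker _ (Finset.notMem_erase _ _)).mp h1
    exact (indep_subtype (fun e => φ (w e)) (fun e => e ≠ e₀) _
      (fun e he => Finset.ne_of_mem_erase he)).mp h2
  · have h2 : Indep (fun e => φ (w e)) ((F' : Finset _).map (Function.Embedding.subtype (fun e => e ≠ e₀))) := by
      refine (indep_subtype (fun e => φ (w e)) (fun e => e ≠ e₀) _ (fun e he => mem_map_ne (fun e => e ≠ e₀) F'.1 he)).mpr ?_
      rw [map_subtype_subtype]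
      exact F'.2
    exact (indep_insert_contract w φ e₀ hfree hker _
      (fun h => (mem_map_ne (fun e => e ≠ e₀) F'.1 h) rfl)).mpr h2
  · rintro ⟨F, hF⟩
    apply Subtype.ext
    simp only [Finset.subtype_map]
    rw [Finset.filter_true_of_mem (fun e he => Finset.ne_of_mem_erase he)]
    exact Finset.insert_erase hF.2
  · rintro ⟨F', hF'⟩
    apply Subtype.ext
    simp only
    rw [Finset.erase_insert (fun h => (mem_map_ne (fun e => e ≠ e₀) F' h) rfl)]
    exact map_subtype_subtype _ _

/-- Pushforward along the collapse map identifying `s` with `t`. -/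
def contractHom [DecidableEq V] (s t : V) : (V → ℤ) →+ (V → ℤ) where
  toFun f := fun v => if v = s then 0 else if v = t then f t + f s else f v
  map_zero' := by
    funext v
    by_cases h1 : v = s <;> by_cases h2 : v = t <;> simp [h1, h2]
  map_add' f g := by
    funext v
    by_cases h1 : v = s <;> by_cases h2 : v = t <;> simp [h1, h2] <;> split_ifs <;> ring

lemma contractHom_single [DecidableEq V] {s t : V} (hst : s ≠ t) (a : V) :
    contractHom s t (Pi.single a 1)
      = Pi.single (if a = s then t else a) 1 := by
  funext v
  simp only [contractHom, AddMonoidHom.coe_mk, ZeroHom.coe_mk, Pi.single_apply]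
  by_cases h3 : a = s
  · simp only [if_pos h3]
    by_cases h1 : v = s
    · have hvt : ¬ v = t := fun hh => hst (by rw [← h1, hh])
      rw [if_pos h1, if_neg hvt]
    · rw [if_neg h1]
      by_cases h2 : v = t
      · have hta : ¬ t = a := fun hh => hst (hh.trans h3).symm
        rw [if_pos h2, if_pos h2, if_neg hta, if_pos h3.symm, zero_add]
      · rw [if_neg h2, if_neg h2, if_neg (fun hh : v = a => h1 (hh.trans h3))]
  · simp only [if_neg h3]
    by_cases h1 : v = s
    · rw [if_pos h1, if_neg (fun hh : v = a => h3 (hh.symm.trans h1))]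
    · rw [if_neg h1]
      by_cases h2 : v = t
      · have hsa : ¬ s = a := fun hh => h3 hh.symm
        rw [if_pos h2, if_neg hsa, add_zero, h2]
      · rw [if_neg h2]

lemma contractHom_u [DecidableEq V] {s t : V} (hst : s ≠ t) :
    contractHom s t (Pi.single t 1 - Pi.single s 1) = 0 := by
  rw [map_sub, contractHom_single hst, contractHom_single hst,
    if_neg (fun hh : t = s => hst hh.symm), if_pos rfl, sub_self]

lemma contractHom_ker [DecidableEq V] {s t : V} (hst : s ≠ t) (f : V → ℤ) :
    contractHom s t f = 0 ↔ ∃ n : ℤ, f = n • (Pi.single t 1 - Pi.single s 1) := by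
  have hts : ¬ t = s := fun hh => hst hh.symm
  constructor
  · intro h
    have ht : f t + f s = 0 := by
      have := congrFun h t
      simpa [contractHom, hts] using this
    refine ⟨f t, ?_⟩
    funext v
    by_cases h1 : v = s
    · have hvt : ¬ v = t := fun hh => hst (by rw [← h1, hh])
      simp only [Pi.smul_apply, Pi.sub_apply, Pi.single_apply, if_pos h1, if_neg hvt,
        smul_eq_mul]
      have e1 : f t * ((0:ℤ) - 1) = - f t := by ring
      have e2 : f v = f s := congrArg f h1
      omega
    · by_cases h2 : v = t
      · simp only [Pi.smul_apply, Pi.sub_apply, Pi.single_apply, if_pos h2, if_neg h1,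
          smul_eq_mul]
        have e1 : f t * ((1:ℤ) - 0) = f t := by ring
        have e2 : f v = f t := congrArg f h2
        omega
      · have hv := congrFun h v
        simp only [contractHom, AddMonoidHom.coe_mk, ZeroHom.coe_mk, Pi.zero_apply,
          if_neg h1, if_neg h2] at hv
        simp [Pi.single_apply, h1, h2, hv]
  · rintro ⟨n, rfl⟩
    rw [map_zsmul, contractHom_u hst, smul_zero]

lemma sum_map_val' {E M : Type*} [AddCommMonoid M] (p : E → Prop) [DecidablePred p]
    (F' : Finset (Subtype p)) (f : E → M) :
    ∑ e ∈ F'.map (Function.Embedding.subtype p), f e = ∑ e' ∈ F', f e'.val := by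
  rw [Finset.sum_map]
  simp [Function.Embedding.coe_subtype]

lemma hval_aux {V E : Type*} [DecidableEq V] (src tgt : E → V) (e₀ : E)
    (F' : Finset {e : E // e ≠ e₀}) :
    ∑ e' ∈ F', wv (fun x : {e : E // e ≠ e₀} => src x.val) (fun x => tgt x.val) e'
      = ∑ e ∈ F'.map (Function.Embedding.subtype (fun e => e ≠ e₀)), wv src tgt e := by
  classical
  rw [sum_map_val']
  rfl

lemma range_split {V E : Type*} [DecidableEq V] [DecidableEq E] (src tgt : E → V) (e₀ : E) :
    (Set.range fun F : Finset E => ∑ e ∈ F, wv src tgt e)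
      = (Set.range fun F' : Finset {e : E // e ≠ e₀} =>
          ∑ e' ∈ F', wv (fun x => src x.val) (fun x => tgt x.val) e')
        ∪ (fun x => wv src tgt e₀ + x) ''
          (Set.range fun F' : Finset {e : E // e ≠ e₀} =>
            ∑ e' ∈ F', wv (fun x => src x.val) (fun x => tgt x.val) e') := by
  classical
  apply Set.Subset.antisymm
  · rintro x ⟨F, rfl⟩
    by_cases hmem : e₀ ∈ F
    · right
      refine ⟨∑ e ∈ F.erase e₀, wv src tgt e,
        ⟨(F.erase e₀).subtype (fun e => e ≠ e₀), ?_⟩, ?_⟩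
      · show ∑ e' ∈ (F.erase e₀).subtype (fun e => e ≠ e₀),
            wv (fun x : {e : E // e ≠ e₀} => src x.val) (fun x => tgt x.val) e'
          = ∑ e ∈ F.erase e₀, wv src tgt e
        rw [hval_aux, Finset.subtype_map,
          Finset.filter_true_of_mem (fun e he => Finset.ne_of_mem_erase he)]
      · show wv src tgt e₀ + ∑ e ∈ F.erase e₀, wv src tgt e = ∑ e ∈ F, wv src tgt e
        rw [add_comm]
        exact Finset.sum_erase_add F _ hmem
    · left
      refine ⟨F.subtype (fun e => e ≠ e₀), ?_⟩
      show ∑ e' ∈ F.subtype (fun e => e ≠ e₀),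
          wv (fun x : {e : E // e ≠ e₀} => src x.val) (fun x => tgt x.val) e'
        = ∑ e ∈ F, wv src tgt e
      have hfil : Finset.filter (fun e => e ≠ e₀) F = F :=
        Finset.filter_true_of_mem (fun e he hh => hmem (by rwa [hh] at he))
      rw [hval_aux, Finset.subtype_map, hfil]
  · rintro x (⟨F', rfl⟩ | ⟨y, ⟨F', rfl⟩, rfl⟩)
    · exact ⟨F'.map (Function.Embedding.subtype (fun e => e ≠ e₀)),
        (hval_aux src tgt e₀ F').symm⟩
    · refine ⟨insert e₀ (F'.map (Function.Embedding.subtype (fun e => e ≠ e₀))), ?_⟩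
      show ∑ e ∈ insert e₀ (F'.map (Function.Embedding.subtype (fun e => e ≠ e₀))),
          wv src tgt e
        = wv src tgt e₀ + ∑ e' ∈ F', wv (fun x : {e : E // e ≠ e₀} => src x.val)
            (fun x => tgt x.val) e'
      rw [Finset.sum_insert (fun h => (mem_map_ne (fun e => e ≠ e₀) F' h) rfl), hval_aux]

lemma range_loop {V E : Type*} [DecidableEq V] [DecidableEq E] (src tgt : E → V) (e₀ : E)
    (hw0 : wv src tgt e₀ = 0) :
    (Set.range fun F : Finset E => ∑ e ∈ F, wv src tgt e)
      = Set.range fun F' : Finset {e : E // e ≠ e₀} =>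
          ∑ e' ∈ F', wv (fun x => src x.val) (fun x => tgt x.val) e' := by
  classical
  rw [range_split src tgt e₀]
  apply Set.Subset.antisymm
  · rintro x (hx | ⟨y, hy, rfl⟩)
    · exact hx
    · rw [hw0]
      simpa using hy
  · intro x hx
    exact Set.mem_union_left _ hx

lemma range_contract {V E : Type*} [DecidableEq V] (src tgt : E → V) (e₀ : E)
    (c : V → V) (φ : (V → ℤ) →+ (V → ℤ))
    (hφw : ∀ e : E, φ (wv src tgt e) = wv (fun x => c (src x)) (fun x => c (tgt x)) e) :
    φ '' (Set.range fun F' : Finset {e : E // e ≠ e₀} =>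
        ∑ e' ∈ F', wv (fun x => src x.val) (fun x => tgt x.val) e')
      = Set.range fun F' : Finset {e : E // e ≠ e₀} =>
          ∑ e' ∈ F', wv (fun x => c (src x.val)) (fun x => c (tgt x.val)) e' := by
  classical
  have key : ∀ F' : Finset {e : E // e ≠ e₀},
      φ (∑ e' ∈ F', wv (fun x : {e : E // e ≠ e₀} => src x.val) (fun x => tgt x.val) e')
        = ∑ e' ∈ F', wv (fun x : {e : E // e ≠ e₀} => c (src x.val))
            (fun x => c (tgt x.val)) e' := by
    intro F'
    rw [map_sum]
    refine Finset.sum_congr rfl fun e' _ => ?_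
    exact hφw e'.val
  apply Set.Subset.antisymm
  · rintro _ ⟨y, ⟨F', rfl⟩, rfl⟩
    exact ⟨F', (key F').symm⟩
  · rintro _ ⟨F', rfl⟩
    exact ⟨_, ⟨F', rfl⟩, key F'⟩

theorem core (n : ℕ) : ∀ {E V : Type*} [Fintype E] [DecidableEq V],
    Fintype.card E = n → ∀ (src tgt : E → V),
    Nat.card {F : Finset E // Indep (wv src tgt) F}
      = Nat.card (Set.range fun F : Finset E => ∑ e ∈ F, wv src tgt e) := by
  induction n using Nat.strong_induction_on with
  | _ n IH =>
  intro E V _ _ hcard src tgt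
  classical
  rcases isEmpty_or_nonempty E with hE | hE
  · have huniq : ∀ F : Finset E, F = (∅ : Finset E) := fun F =>
      Finset.eq_empty_of_isEmpty F
    have h1 : Nat.card {F : Finset E // Indep (wv src tgt) F} = 1 := by
      haveI : Nonempty {F : Finset E // Indep (wv src tgt) F} :=
        ⟨⟨∅, fun g hg e he => absurd he (Finset.notMem_empty e)⟩⟩
      haveI : Subsingleton {F : Finset E // Indep (wv src tgt) F} :=
        ⟨fun F G => Subtype.ext (by rw [huniq F.1, huniq G.1])⟩
      exact Nat.card_unique
    have h2 : (Set.range fun F : Finset E => ∑ e ∈ F, wv src tgt e)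
        = {∑ e ∈ (∅ : Finset E), wv src tgt e} := by
      apply Set.Subset.antisymm
      · rintro x ⟨F, rfl⟩
        simp only [Set.mem_singleton_iff]
        rw [huniq F]
      · rintro x hx
        exact ⟨∅, (Set.mem_singleton_iff.mp hx).symm⟩
    rw [h1, h2, Nat.card_coe_set_eq, Set.ncard_singleton]
  · obtain ⟨e₀⟩ := hE
    have hcard' : Fintype.card {e : E // e ≠ e₀} < n := by
      rw [← hcard]
      exact Fintype.card_subtype_lt (x := e₀) (by simp)
    have hwval : (fun e' : {e : E // e ≠ e₀} => wv src tgt e'.val)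
        = wv (fun x : {e : E // e ≠ e₀} => src x.val) (fun x => tgt x.val) := rfl
    by_cases hloop : src e₀ = tgt e₀
    · -- loop case
      have hw0 : wv src tgt e₀ = 0 := by simp [wv, hloop]
      have hnotin : ∀ F : Finset E, Indep (wv src tgt) F → e₀ ∉ F := by
        intro F hF hmem
        have hsum : ∑ e ∈ F, (if e = e₀ then (1:ℤ) else 0) • wv src tgt e = 0 := by
          have hcong : ∀ e ∈ F, (if e = e₀ then (1:ℤ) else 0) • wv src tgt e
              = if e = e₀ then wv src tgt e else 0 := by
            intro e _
            split_ifs <;> simp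
          rw [Finset.sum_congr rfl hcong, Finset.sum_ite_eq' F e₀ (wv src tgt),
            if_pos hmem, hw0]
        have := hF _ hsum e₀ hmem
        simp at this
      have e1 : Nat.card {F : Finset E // Indep (wv src tgt) F}
          = Nat.card {F' : Finset {e : E // e ≠ e₀} //
              Indep (wv (fun x => src x.val) (fun x => tgt x.val)) F'} := by
        rw [← hwval]
        exact Nat.card_congr ((Equiv.subtypeEquivRight fun F =>
          ⟨fun h => ⟨h, hnotin F h⟩, And.left⟩).trans (eqDel (wv src tgt) e₀))
      rw [e1, range_loop src tgt e₀ hw0]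
      exact IH _ hcard' rfl _ _
    · -- contraction case
      have hst : src e₀ ≠ tgt e₀ := hloop
      have hfree : ∀ m : ℤ, m • wv src tgt e₀ = 0 → m = 0 := by
        intro m hm
        have h2 := congrFun hm (tgt e₀)
        have hns : ¬ (tgt e₀ = src e₀) := fun hh => hst hh.symm
        simp [wv, Pi.single_apply, hns] at h2
        omega
      have hker : ∀ m, contractHom (src e₀) (tgt e₀) m = 0
          ↔ ∃ k : ℤ, m = k • wv src tgt e₀ :=
        fun m => contractHom_ker hst m
      have hφw : ∀ e : E, contractHom (src e₀) (tgt e₀) (wv src tgt e)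
          = wv (fun x => if src x = src e₀ then tgt e₀ else src x)
              (fun x => if tgt x = src e₀ then tgt e₀ else tgt x) e := by
        intro e
        show contractHom (src e₀) (tgt e₀) (Pi.single (tgt e) 1 - Pi.single (src e) 1) = _
        rw [map_sub, contractHom_single hst, contractHom_single hst]
        rfl
      have hφwval : (fun e' : {e : E // e ≠ e₀} =>
            contractHom (src e₀) (tgt e₀) (wv src tgt e'.val))
          = wv (fun x : {e : E // e ≠ e₀} => if src x.val = src e₀ then tgt e₀ else src x.val)
              (fun x => if tgt x.val = src e₀ then tgt e₀ else tgt x.val) := by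
        funext e'
        exact hφw e'.val
      have lhs1 : Nat.card {F : Finset E // Indep (wv src tgt) F}
          = Nat.card {F' : Finset {e : E // e ≠ e₀} //
              Indep (wv (fun x => src x.val) (fun x => tgt x.val)) F'}
            + Nat.card {F' : Finset {e : E // e ≠ e₀} //
                Indep (wv (fun x => if src x.val = src e₀ then tgt e₀ else src x.val)
                  (fun x => if tgt x.val = src e₀ then tgt e₀ else tgt x.val)) F'} := by
        rw [card_partition (fun F : Finset E => Indep (wv src tgt) F) (fun F => e₀ ∉ F)]
        congr 1
        · rw [← hwval]
          exact Nat.card_congr (eqDel (wv src tgt) e₀)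
        · rw [← hφwval]
          exact Nat.card_congr ((Equiv.subtypeEquivRight fun F =>
            ⟨fun h => ⟨h.1, not_not.mp h.2⟩, fun h => ⟨h.1, not_not.mpr h.2⟩⟩).trans
            (eqCon (wv src tgt) (contractHom (src e₀) (tgt e₀)) e₀ hfree hker))
      have hchain : ∀ x ∈ (Set.range fun F' : Finset {e : E // e ≠ e₀} =>
            ∑ e' ∈ F', wv (fun x => src x.val) (fun x => tgt x.val) e'),
          ∀ k : ℤ, 1 ≤ k
          → x + k • wv src tgt e₀ ∈ (Set.range fun F' : Finset {e : E // e ≠ e₀} =>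
            ∑ e' ∈ F', wv (fun x => src x.val) (fun x => tgt x.val) e')
          → x + wv src tgt e₀ ∈ (Set.range fun F' : Finset {e : E // e ≠ e₀} =>
            ∑ e' ∈ F', wv (fun x => src x.val) (fun x => tgt x.val) e') := by
        rintro x ⟨F₁, rfl⟩ k hk hx'
        obtain ⟨F₂, hF₂⟩ := hx'
        obtain ⟨F₃, hF₃⟩ := chain_lemma (fun x : {e : E // e ≠ e₀} => src x.val)
          (fun x => tgt x.val) hst F₁ F₂ hk hF₂
        exact ⟨F₃, hF₃⟩
      have rhs1 : Nat.card (Set.range fun F : Finset E => ∑ e ∈ F, wv src tgt e)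
          = Nat.card (Set.range fun F' : Finset {e : E // e ≠ e₀} =>
              ∑ e' ∈ F', wv (fun x => src x.val) (fun x => tgt x.val) e')
            + Nat.card (Set.range fun F' : Finset {e : E // e ≠ e₀} =>
                ∑ e' ∈ F', wv (fun x => if src x.val = src e₀ then tgt e₀ else src x.val)
                  (fun x => if tgt x.val = src e₀ then tgt e₀ else tgt x.val) e') := by
        rw [range_split src tgt e₀,
          ← range_contract src tgt e₀ (fun v => if v = src e₀ then tgt e₀ else v)
            (contractHom (src e₀) (tgt e₀)) hφw,
          Nat.card_coe_set_eq, Nat.card_coe_set_eq, Nat.card_coe_set_eq]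
        exact count_step (Set.finite_range _) hfree hchain
          (contractHom (src e₀) (tgt e₀)) hker
      rw [lhs1, rhs1]
      congr 1
      · exact IH _ hcard' rfl _ _
      · exact IH _ hcard' rfl _ _

lemma sum_chi {E M : Type*} [AddCommGroup M] [DecidableEq E] (F : Finset E) (w : E → M)
    (e : E) (he : e ∈ F) (ε : ℤ) :
    ∑ a ∈ F, (if a = e then ε else 0) • w a = ε • w e := by
  have hcong : ∀ a ∈ F, (if a = e then ε else 0) • w a = if a = e then ε • w a else 0 := by
    intro a _
    split_ifs <;> simp
  rw [Finset.sum_congr rfl hcong, Finset.sum_ite_eq' F e (fun a => ε • w a), if_pos he]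

lemma walk_coeff {V E : Type*} [DecidableEq V] [DecidableEq E] (src tgt : E → V)
    (F : Finset E) (hinj : Set.InjOn (fun e => s(src e, tgt e)) ↑F)
    {x y : V} (p : (SimpleGraph.fromRel fun a b => ∃ e ∈ F, s(src e, tgt e) = s(a, b)).Walk x y)
    (hp : p.IsTrail) :
    ∃ g : E → ℤ, (∑ e ∈ F, g e • wv src tgt e = Pi.single y 1 - Pi.single x 1)
      ∧ (∀ e, g e ≠ 0 → s(src e, tgt e) ∈ p.edges)
      ∧ (∀ e ∈ F, s(src e, tgt e) ∈ p.edges → g e ≠ 0) := by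
  induction p with
  | nil =>
    refine ⟨0, by simp, by simp, by simp⟩
  | @cons x x' y h q ihq =>
    rw [SimpleGraph.Walk.isTrail_cons] at hp
    obtain ⟨gq, hsum, hsupp, hfull⟩ := ihq hp.1
    rw [SimpleGraph.fromRel_adj] at h
    have hex : ∃ e₂ ∈ F, s(src e₂, tgt e₂) = s(x, x') := by
      rcases h.2 with ⟨e₂, he₂, hh⟩ | ⟨e₂, he₂, hh⟩
      · exact ⟨e₂, he₂, hh⟩
      · exact ⟨e₂, he₂, hh.trans (Sym2.eq_swap)⟩
    obtain ⟨e₂, he₂F, hends⟩ := hex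
    have hgq0 : gq e₂ = 0 := by
      by_contra hne
      exact hp.2 (hends ▸ hsupp e₂ hne)
    have hε : ∃ ε : ℤ, (ε = 1 ∨ ε = -1) ∧
        ε • wv src tgt e₂ = Pi.single x' 1 - Pi.single x 1 := by
      rcases Sym2.eq_iff.mp hends with ⟨h1, h2⟩ | ⟨h1, h2⟩
      · exact ⟨1, Or.inl rfl, by rw [one_smul, wv, h1, h2]⟩
      · refine ⟨-1, Or.inr rfl, ?_⟩
        rw [wv, h1, h2]
        abel
    obtain ⟨ε, hε1, hεw⟩ := hε
    refine ⟨fun e => (if e = e₂ then ε else 0) + gq e, ?_, ?_, ?_⟩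
    · have : ∑ e ∈ F, ((if e = e₂ then ε else 0) + gq e) • wv src tgt e
          = (∑ e ∈ F, (if e = e₂ then ε else 0) • wv src tgt e)
            + ∑ e ∈ F, gq e • wv src tgt e := by
        rw [← Finset.sum_add_distrib]
        exact Finset.sum_congr rfl fun e _ => by rw [add_smul]
      rw [this, sum_chi F _ e₂ he₂F ε, hsum, hεw]
      abel
    · intro e hge
      rw [SimpleGraph.Walk.edges_cons, List.mem_cons]
      by_cases hee : e = e₂
      · left
        rw [hee, hends]
      · right
        refine hsupp e ?_
        simpa [hee] using hge
    · intro e heF hmem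
      rw [SimpleGraph.Walk.edges_cons, List.mem_cons] at hmem
      rcases hmem with hmem | hmem
      · have he2 : e = e₂ := hinj heF he₂F
          (show s(src e, tgt e) = s(src e₂, tgt e₂) by rw [hmem, hends])
        subst he2
        show (if e = e then ε else 0) + gq e ≠ 0
        rw [if_pos rfl, hgq0, add_zero]
        rcases hε1 with rfl | rfl <;> norm_num
      · have hee : e ≠ e₂ := by
          intro hh
          exact hp.2 (by rw [← hends, ← hh]; exact hmem)
        show (if e = e₂ then ε else 0) + gq e ≠ 0
        rw [if_neg hee, zero_add]
        exact hfull e heF hmem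


lemma indep_of_forest {V E : Type*} [Fintype V] [DecidableEq V] (src tgt : E → V)
    (F : Finset E) (hF : IsForestEdges (fun e => s(src e, tgt e)) F) :
    Indep (wv src tgt) F := by
  classical
  obtain ⟨hdiag, hinj, hacyc⟩ := hF
  intro g hg e₁ he₁
  have hne : src e₁ ≠ tgt e₁ := by
    intro hh
    exact hdiag e₁ he₁ (by rw [Sym2.mk_isDiag_iff]; exact hh)
  set G : SimpleGraph V := SimpleGraph.fromRel fun x y => ∃ e ∈ F, s(src e, tgt e) = s(x, y)
    with hG
  have hadj : G.Adj (src e₁) (tgt e₁) := by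
    rw [hG, SimpleGraph.fromRel_adj]
    exact ⟨hne, Or.inl ⟨e₁, he₁, rfl⟩⟩
  have hbr := (SimpleGraph.isAcyclic_iff_forall_adj_isBridge.mp hacyc) hadj
  rw [SimpleGraph.isBridge_iff] at hbr
  set G' : SimpleGraph V := G \ SimpleGraph.fromEdgeSet {s(src e₁, tgt e₁)} with hG'
  set C : Finset V := Finset.univ.filter (fun v => G'.Reachable v (tgt e₁)) with hC
  -- apply the functional f ↦ ∑ v ∈ C, f v to hg
  have hkey := congrArg (fun f : V → ℤ => ∑ v ∈ C, f v) hg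
  simp only [Finset.sum_apply, Pi.zero_apply, Finset.sum_const_zero] at hkey
  rw [Finset.sum_comm] at hkey
  have hsingle : ∀ a : V, ∑ v ∈ C, (Pi.single a 1 : V → ℤ) v = if a ∈ C then 1 else 0 := by
    intro a
    have : ∀ v ∈ C, (Pi.single a 1 : V → ℤ) v = if v = a then 1 else 0 := fun v _ =>
      Pi.single_apply a (1:ℤ) v
    rw [Finset.sum_congr rfl this, Finset.sum_ite_eq' C a (fun _ => (1:ℤ))]
  have hterm : ∀ e ∈ F, ∑ v ∈ C, (g e • wv src tgt e) v
      = g e * ((if tgt e ∈ C then (1:ℤ) else 0) - (if src e ∈ C then 1 else 0)) := by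
    intro e _
    have : ∀ v ∈ C, (g e • wv src tgt e) v
        = g e * ((Pi.single (tgt e) 1 : V → ℤ) v - (Pi.single (src e) 1 : V → ℤ) v) := by
      intro v _
      rfl
    rw [Finset.sum_congr rfl this, ← Finset.mul_sum, Finset.sum_sub_distrib,
      hsingle, hsingle]
  rw [Finset.sum_congr rfl hterm] at hkey
  have hzero : ∀ e ∈ F, e ≠ e₁ →
      g e * ((if tgt e ∈ C then (1:ℤ) else 0) - (if src e ∈ C then 1 else 0)) = 0 := by
    intro e heF hne₁
    have hnde : src e ≠ tgt e := by
      intro hh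
      exact hdiag e heF (by rw [Sym2.mk_isDiag_iff]; exact hh)
    have hadje : G'.Adj (src e) (tgt e) := by
      rw [hG', SimpleGraph.sdiff_adj]
      constructor
      · rw [hG, SimpleGraph.fromRel_adj]
        exact ⟨hnde, Or.inl ⟨e, heF, rfl⟩⟩
      · rw [SimpleGraph.fromEdgeSet_adj]
        rintro ⟨hh, -⟩
        rw [Set.mem_singleton_iff] at hh
        exact hne₁ (hinj heF he₁ hh)
    have hiff : (tgt e ∈ C) ↔ (src e ∈ C) := by
      rw [hC]
      simp only [Finset.mem_filter, Finset.mem_univ, true_and]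
      exact ⟨fun hr => (hadje.reachable).trans hr, fun hr => (hadje.symm.reachable).trans hr⟩
    by_cases hmem : tgt e ∈ C
    · rw [if_pos hmem, if_pos (hiff.mp hmem), sub_self, mul_zero]
    · rw [if_neg hmem, if_neg (fun hh => hmem (hiff.mpr hh)), sub_self, mul_zero]
  rw [Finset.sum_eq_single_of_mem e₁ he₁ hzero] at hkey
  have htgtC : tgt e₁ ∈ C := by
    rw [hC]
    simp only [Finset.mem_filter, Finset.mem_univ, true_and]
    exact SimpleGraph.Reachable.refl _
  have hsrcC : src e₁ ∉ C := by
    rw [hC]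
    simp only [Finset.mem_filter, Finset.mem_univ, true_and]
    exact hbr
  rw [if_pos htgtC, if_neg hsrcC, sub_zero, mul_one] at hkey
  exact hkey

lemma forest_of_indep {V E : Type*} [DecidableEq V] (src tgt : E → V)
    (F : Finset E) (h : Indep (wv src tgt) F) :
    IsForestEdges (fun e => s(src e, tgt e)) F := by
  classical
  have hdiagOK : ∀ e ∈ F, ¬ (s(src e, tgt e)).IsDiag := by
    intro e he hdiag
    rw [Sym2.mk_isDiag_iff] at hdiag
    have hw0 : wv src tgt e = 0 := by simp [wv, hdiag]
    have := h (fun a => if a = e then 1 else 0)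
      (by rw [sum_chi F (wv src tgt) e he 1, one_smul, hw0]) e he
    simp at this
  have hinjOK : Set.InjOn (fun e => s(src e, tgt e)) ↑F := by
    intro e he e' he' heq
    simp only at heq
    by_contra hne
    have hεex : ∃ ε : ℤ, ε ≠ 0 ∧ wv src tgt e + ε • wv src tgt e' = 0 := by
      rcases Sym2.eq_iff.mp heq with ⟨h1, h2⟩ | ⟨h1, h2⟩
      · refine ⟨-1, by norm_num, ?_⟩
        rw [wv, wv, h1, h2]
        abel
      · refine ⟨1, one_ne_zero, ?_⟩
        rw [wv, wv, h1, h2]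
        abel
    obtain ⟨ε, hε0, hεw⟩ := hεex
    have hsum : ∑ a ∈ F, ((if a = e then (1:ℤ) else 0) + (if a = e' then ε else 0))
        • wv src tgt a = 0 := by
      have hdist : ∀ a ∈ F, ((if a = e then (1:ℤ) else 0) + (if a = e' then ε else 0))
          • wv src tgt a = (if a = e then (1:ℤ) else 0) • wv src tgt a
            + (if a = e' then ε else 0) • wv src tgt a := fun a _ => add_smul _ _ _
      rw [Finset.sum_congr rfl hdist, Finset.sum_add_distrib,
        sum_chi F _ e he 1, sum_chi F _ e' he' ε, one_smul, hεw]
    have := h _ hsum e he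
    rw [if_pos rfl, if_neg hne] at this
    norm_num at this
  refine ⟨hdiagOK, hinjOK, ?_⟩
  intro v c hc
  obtain ⟨g, hsum, hsupp, hfull⟩ := walk_coeff src tgt F hinjOK c hc.isCircuit.isTrail
  cases c with
  | nil => exact hc.ne_nil rfl
  | @cons _ x' _ hadj q =>
    have hadj2 := hadj
    rw [SimpleGraph.fromRel_adj] at hadj2
    have hex : ∃ e₂ ∈ F, s(src e₂, tgt e₂) = s(v, x') := by
      rcases hadj2.2 with ⟨e₂, he₂, hh⟩ | ⟨e₂, he₂, hh⟩
      · exact ⟨e₂, he₂, hh⟩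
      · exact ⟨e₂, he₂, hh.trans (Sym2.eq_swap)⟩
    obtain ⟨e₂, he₂F, hends⟩ := hex
    have hmem : s(src e₂, tgt e₂) ∈ (SimpleGraph.Walk.cons hadj q).edges := by
      rw [SimpleGraph.Walk.edges_cons, List.mem_cons]
      exact Or.inl hends
    have hge : g e₂ ≠ 0 := hfull e₂ he₂F hmem
    exact hge (h g (hsum.trans (sub_self _)) e₂ he₂F)


lemma deg_score {V E : Type*} [DecidableEq V] (src tgt : E → V) (L : Finset V)
    (hL : ∀ e : E, src e ∈ L ∧ tgt e ∉ L) (F : Finset E) (v : V) :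
    (if v ∈ L then -((degIn src tgt F v : ℤ)) else (degIn src tgt F v : ℤ))
      = (∑ e ∈ F, wv src tgt e) v := by
  classical
  have hrhs : (∑ e ∈ F, wv src tgt e) v
      = ((F.filter fun e => tgt e = v).card : ℤ)
        - ((F.filter fun e => src e = v).card : ℤ) := by
    rw [Finset.sum_apply]
    have hcong : ∀ e ∈ F, wv src tgt e v
        = (if tgt e = v then (1:ℤ) else 0) - (if src e = v then (1:ℤ) else 0) := by
      intro e _
      simp [wv, Pi.single_apply, eq_comm]
    rw [Finset.sum_congr rfl hcong, Finset.sum_sub_distrib, Finset.sum_boole,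
      Finset.sum_boole]
  rw [hrhs, degIn]
  by_cases hv : v ∈ L
  · have h0 : (F.filter fun e => tgt e = v) = ∅ := by
      rw [Finset.filter_eq_empty_iff]
      intro e _ he
      exact (hL e).2 (by rwa [he])
    rw [if_pos hv, h0]
    push_cast
    simp
  · have h0 : (F.filter fun e => src e = v) = ∅ := by
      rw [Finset.filter_eq_empty_iff]
      intro e _ he
      exact hv (by rw [← he]; exact (hL e).1)
    rw [if_neg hv, h0]
    push_cast
    simp

lemma final_count {V E : Type*} [Fintype E] [DecidableEq V] (src tgt : E → V)
    (L : Finset V) (hL : ∀ e : E, src e ∈ L ∧ tgt e ∉ L) :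
    Nat.card (Set.range fun F : Finset E => degIn src tgt F)
      = Nat.card (Set.range fun F : Finset E => ∑ e ∈ F, wv src tgt e) := by
  classical
  have hinj : Function.Injective
      (fun d : V → ℕ => fun v => if v ∈ L then -((d v : ℤ)) else (d v : ℤ)) := by
    intro d₁ d₂ hd
    funext v
    have hv2 := congrFun hd v
    simp only at hv2
    by_cases hv : v ∈ L
    · rw [if_pos hv, if_pos hv] at hv2
      exact_mod_cast neg_inj.mp hv2
    · rw [if_neg hv, if_neg hv] at hv2
      exact_mod_cast hv2
  have hcomp : (fun F : Finset E => ∑ e ∈ F, wv src tgt e)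
      = (fun d : V → ℕ => fun v => if v ∈ L then -((d v : ℤ)) else (d v : ℤ))
        ∘ (fun F : Finset E => degIn src tgt F) := by
    funext F v
    exact (deg_score src tgt L hL F v).symm
  rw [hcomp, Set.range_comp, Nat.card_coe_set_eq, Nat.card_coe_set_eq,
    Set.ncard_image_of_injective _ hinj]

/-- For a bipartite multigraph `G`, the number of spanning forests equals the
number of distinct degree sequences of spanning subgraphs of `G`. -/
theorem stmt_13 [Fintype V] [Fintype E] [DecidableEq V] (src tgt : E → V)
    (L : Finset V)
    (hbip : ∀ e, (src e ∈ L ∧ tgt e ∉ L) ∨ (src e ∉ L ∧ tgt e ∈ L)) :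
    Nat.card {A : Finset E // IsForestEdges (fun e => s(src e, tgt e)) A} =
      Nat.card (Set.range fun F : Finset E => degIn src tgt F) := by
  classical
  have hforest : (fun e => s((if src e ∈ L then src e else tgt e),
      (if src e ∈ L then tgt e else src e))) = fun e : E => s(src e, tgt e) := by
    funext e
    by_cases h : src e ∈ L
    · simp [h]
    · simp only [if_neg h]
      exact Sym2.eq_swap
  have hL' : ∀ e : E, (if src e ∈ L then src e else tgt e) ∈ L
      ∧ (if src e ∈ L then tgt e else src e) ∉ L := by
    intro e
    rcases hbip e with ⟨h1, h2⟩ | ⟨h1, h2⟩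
    · rw [if_pos h1, if_pos h1]
      exact ⟨h1, h2⟩
    · rw [if_neg h1, if_neg h1]
      exact ⟨h2, h1⟩
  have hiff : ∀ A : Finset E, IsForestEdges (fun e => s(src e, tgt e)) A
      ↔ Indep (wv (fun e => if src e ∈ L then src e else tgt e)
          (fun e => if src e ∈ L then tgt e else src e)) A := by
    intro A
    rw [show (fun e : E => s(src e, tgt e))
        = (fun e => s((if src e ∈ L then src e else tgt e),
            (if src e ∈ L then tgt e else src e))) from hforest.symm]
    exact ⟨indep_of_forest _ _ A, forest_of_indep _ _ A⟩
  have hdeg : (fun F : Finset E => degIn src tgt F)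
      = (fun F : Finset E => degIn (fun e => if src e ∈ L then src e else tgt e)
          (fun e => if src e ∈ L then tgt e else src e) F) := by
    funext F v
    rw [degIn, degIn, Finset.card_filter, Finset.card_filter, Finset.card_filter,
      Finset.card_filter, ← Finset.sum_add_distrib, ← Finset.sum_add_distrib]
    refine Finset.sum_congr rfl fun e _ => ?_
    by_cases h : src e ∈ L
    · simp [h]
    · simp only [if_neg h]
      rw [add_comm]
  have step1 : Nat.card {A : Finset E // IsForestEdges (fun e => s(src e, tgt e)) A}
      = Nat.card {A : Finset E // Indep (wv (fun e => if src e ∈ L then src e else tgt e)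
          (fun e => if src e ∈ L then tgt e else src e)) A} :=
    Nat.card_congr (Equiv.subtypeEquivRight hiff)
  rw [step1, core (Fintype.card E) rfl _ _, hdeg,
    final_count (fun e => if src e ∈ L then src e else tgt e)
      (fun e => if src e ∈ L then tgt e else src e) L hL']
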